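/- Collisions happen in finite time: if (m₁,m₂,m₃,ξ,p) is a solution of the reduced two-body system on [t₀, t*) with ξ(t) → +∞ as t → t*⁻, then t* < ∞. Equivalently, there is no solution defined on all of [t₀, ∞) along which ξ(t) → +∞ as t → ∞. -/

import Mathlib

open Filter Set

/-- The filter of approach `t → t*⁻`, where `t* ∈ ℝ ∪ {±∞}` is encoded as an `EReal`:
for finite `t*` this is `𝓝[<] t*`, and for `t* = ⊤` it is `atTop`. -/
noncomputable def approachFilter (tstar : EReal) : Filter ℝ :=
  Filter.comap (fun t : ℝ => (t : EReal)) (nhdsWithin tstar (Set.Iio tstar))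

lemma const_of_hasDerivAt_zero' {f : ℝ → ℝ} {a : ℝ} (h : ∀ t, a ≤ t → HasDerivAt f 0 t) :
    ∀ t, a ≤ t → f t = f a := fun b hb =>
  constant_of_has_deriv_right_zero
    (fun x hx => (h x hx.1).continuousAt.continuousWithinAt)
    (fun x hx => (h x hx.1).hasDerivWithinAt) b ⟨hb, le_rfl⟩

set_option maxHeartbeats 2000000 in
/-- Collisions happen in finite time: if a solution of the reduced two-body system on
`[t₀, t*)` satisfies `ξ(t) → +∞` as `t → t*⁻`, then `t* < ∞`.  (Equivalently, there is
no solution on all of `[t₀, ∞)` along which `ξ(t) → +∞` as `t → ∞`.) -/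
theorem collision_in_finite_time
    (t0 : ℝ) (tstar : EReal) (ht0 : (t0 : EReal) < tstar)
    (m1 m2 m3 xi p : ℝ → ℝ)
    (hm1 : ∀ t : ℝ, t0 ≤ t → (t : EReal) < tstar →
      HasDerivAt m1 (xi t * (-(m2 t)^2 + (m3 t)^2 + 2 * m2 t * m3 t * xi t)) t)
    (hm2 : ∀ t : ℝ, t0 ≤ t → (t : EReal) < tstar →
      HasDerivAt m2 (m1 t * m2 t * xi t - m3 t * p t - 2 * m1 t * m3 t * (xi t)^2) t)
    (hm3 : ∀ t : ℝ, t0 ≤ t → (t : EReal) < tstar →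
      HasDerivAt m3 (m2 t * p t - m1 t * m3 t * xi t) t)
    (hxi : ∀ t : ℝ, t0 ≤ t → (t : EReal) < tstar →
      HasDerivAt xi (-((xi t)^2 + 1) * (2 * p t - m1 t)) t)
    (hp : ∀ t : ℝ, t0 ≤ t → (t : EReal) < tstar →
      HasDerivAt p (-((xi t)^2 + 1) * (1 + m2 t * m3 t - 2 * (m3 t)^2 * xi t)) t)
    (hcoll : Tendsto xi (approachFilter tstar) atTop) :
    tstar < ⊤ := by
  by_contra htop
  have htop : tstar = ⊤ := top_unique (not_lt.1 htop)
  subst htop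
  -- the collision hypothesis becomes `xi → ∞` along `atTop`
  have hAt : atTop ≤ approachFilter (⊤ : EReal) := by
    rw [approachFilter, ← Filter.tendsto_iff_comap]
    apply tendsto_nhdsWithin_of_tendsto_nhds_of_eventually_within
    · exact EReal.tendsto_nhds_top_iff_real.2 fun x =>
        (eventually_gt_atTop x).mono fun a ha => EReal.coe_lt_coe_iff.2 ha
    · exact Eventually.of_forall fun t => EReal.coe_lt_top t
  have hxiTop : Tendsto xi atTop atTop := hcoll.mono_left hAt
  -- simplified derivative hypotheses
  have hm1' : ∀ t, t0 ≤ t → HasDerivAt m1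
      (xi t * (-(m2 t)^2 + (m3 t)^2 + 2 * m2 t * m3 t * xi t)) t :=
    fun t ht => hm1 t ht (EReal.coe_lt_top t)
  have hm2' : ∀ t, t0 ≤ t → HasDerivAt m2
      (m1 t * m2 t * xi t - m3 t * p t - 2 * m1 t * m3 t * (xi t)^2) t :=
    fun t ht => hm2 t ht (EReal.coe_lt_top t)
  have hm3' : ∀ t, t0 ≤ t → HasDerivAt m3 (m2 t * p t - m1 t * m3 t * xi t) t :=
    fun t ht => hm3 t ht (EReal.coe_lt_top t)
  have hxi' : ∀ t, t0 ≤ t → HasDerivAt xi (-((xi t)^2 + 1) * (2 * p t - m1 t)) t :=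
    fun t ht => hxi t ht (EReal.coe_lt_top t)
  have hp' : ∀ t, t0 ≤ t → HasDerivAt p
      (-((xi t)^2 + 1) * (1 + m2 t * m3 t - 2 * (m3 t)^2 * xi t)) t :=
    fun t ht => hp t ht (EReal.coe_lt_top t)
  -- conservation of total angular momentum L = m1² + m2² + m3²
  set L : ℝ → ℝ := fun s => m1 s ^ 2 + m2 s ^ 2 + m3 s ^ 2 with hLdef
  have hLd : ∀ t, t0 ≤ t → HasDerivAt L 0 t := by
    intro t ht
    have h := (((hm1' t ht).pow 2).add ((hm2' t ht).pow 2)).add ((hm3' t ht).pow 2)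
    exact h.congr_deriv (by ring)
  have hLconst : ∀ t, t0 ≤ t → L t = L t0 := const_of_hasDerivAt_zero' hLd
  -- conservation of energy
  set En : ℝ → ℝ := fun s =>
    p s ^ 2 - m1 s * p s + m3 s ^ 2 * xi s ^ 2 - m2 s * m3 s * xi s - xi s with hEdef
  have hEd : ∀ t, t0 ≤ t → HasDerivAt En 0 t := by
    intro t ht
    have h := (((((hp' t ht).pow 2).sub ((hm1' t ht).mul (hp' t ht))).add
        (((hm3' t ht).pow 2).mul ((hxi' t ht).pow 2))).sub
        ((((hm2' t ht).mul (hm3' t ht))).mul (hxi' t ht))).sub (hxi' t ht)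
    exact h.congr_deriv (by simp only [Pi.pow_apply, Pi.mul_apply]; ring)
  have hEconst : ∀ t, t0 ≤ t → En t = En t0 := const_of_hasDerivAt_zero' hEd
  set Lc : ℝ := L t0 with hLc
  set E0 : ℝ := En t0 with hE0
  have hLc0 : 0 ≤ Lc := by positivity
  set R : ℝ := 1 + 4 * Lc + 8 * |E0| with hR
  have hR1 : (1:ℝ) ≤ R := by have := abs_nonneg E0; linarith
  -- choose T beyond which xi ≥ R
  obtain ⟨T, hT⟩ := eventually_atTop.1 ((hxiTop.eventually_ge_atTop R).and (eventually_ge_atTop t0))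
  have hTt0 : t0 ≤ T := (hT T le_rfl).2
  have hxiR : ∀ t, T ≤ t → R ≤ xi t := fun t ht => (hT t ht).1
  have hxi1 : ∀ t, T ≤ t → 1 ≤ xi t := fun t ht => le_trans hR1 (hxiR t ht)
  have hxipos : ∀ t, T ≤ t → 0 < xi t := fun t ht => lt_of_lt_of_le one_pos (hxi1 t ht)
  -- the auxiliary function G = (2p - m1)/xi and its derivative
  have hGd : ∀ t, T ≤ t → HasDerivAt (fun s => (2 * p s - m1 s) / xi s)
      (((2 * (-((xi t)^2 + 1) * (1 + m2 t * m3 t - 2 * (m3 t)^2 * xi t)) -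
          xi t * (-(m2 t)^2 + (m3 t)^2 + 2 * m2 t * m3 t * xi t)) * xi t -
        (2 * p t - m1 t) * (-((xi t)^2 + 1) * (2 * p t - m1 t))) / xi t ^ 2) t := by
    intro t ht
    exact (((hp' t (hTt0.trans ht)).const_mul 2).sub (hm1' t (hTt0.trans ht))).div
      (hxi' t (hTt0.trans ht)) (ne_of_gt (hxipos t ht))
  -- expanded conservation laws
  have hEc : ∀ t, t0 ≤ t →
      p t ^ 2 - m1 t * p t + m3 t ^ 2 * xi t ^ 2 - m2 t * m3 t * xi t - xi t = E0 :=
    fun t ht => hEconst t ht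
  have hLcon : ∀ t, t0 ≤ t → m1 t ^ 2 + m2 t ^ 2 + m3 t ^ 2 = Lc :=
    fun t ht => hLconst t ht
  -- the key lower bound on the numerator of G'
  have hnum : ∀ t, T ≤ t →
      xi t ^ 2 ≤ (2 * (-((xi t)^2 + 1) * (1 + m2 t * m3 t - 2 * (m3 t)^2 * xi t)) -
          xi t * (-(m2 t)^2 + (m3 t)^2 + 2 * m2 t * m3 t * xi t)) * xi t -
        (2 * p t - m1 t) * (-((xi t)^2 + 1) * (2 * p t - m1 t)) := by
    intro t ht
    have hE := hEc t (hTt0.trans ht)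
    have hL := hLcon t (hTt0.trans ht)
    have hx : 1 + 4 * Lc + 8 * |E0| ≤ xi t := hxiR t ht
    have hx1 : (1:ℝ) ≤ xi t := hxi1 t ht
    have hiden : (2 * (-((xi t)^2 + 1) * (1 + m2 t * m3 t - 2 * (m3 t)^2 * xi t)) -
          xi t * (-(m2 t)^2 + (m3 t)^2 + 2 * m2 t * m3 t * xi t)) * xi t -
        (2 * p t - m1 t) * (-((xi t)^2 + 1) * (2 * p t - m1 t)) =
        2 * xi t ^ 3 + 2 * xi t + (m2 t ^ 2 - m3 t ^ 2) * xi t ^ 2 +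
          2 * m2 t * m3 t * xi t + ((xi t)^2 + 1) *
            (4 * (p t ^ 2 - m1 t * p t + m3 t ^ 2 * xi t ^ 2 - m2 t * m3 t * xi t - xi t)
              + m1 t ^ 2) := by ring
    rw [hiden, hE]
    have h4 : (0:ℝ) ≤ 4 * E0 + m1 t ^ 2 + 4 * |E0| := by
      have := neg_abs_le E0; nlinarith [sq_nonneg (m1 t)]
    nlinarith [mul_nonneg (sub_nonneg.2 hx) (sq_nonneg (xi t)),
      mul_nonneg h4 (by positivity : (0:ℝ) ≤ (xi t)^2 + 1),
      mul_nonneg (abs_nonneg E0) (by nlinarith : (0:ℝ) ≤ xi t ^ 2 - 1),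
      mul_nonneg (by nlinarith [sq_nonneg (m1 t), sq_nonneg (m2 t)] :
        (0:ℝ) ≤ Lc - m3 t ^ 2) (sq_nonneg (xi t)),
      mul_nonneg (sq_nonneg (m2 t + m3 t)) (by linarith : (0:ℝ) ≤ xi t),
      mul_nonneg (sq_nonneg (m1 t)) (by linarith : (0:ℝ) ≤ xi t),
      mul_nonneg hLc0 (by nlinarith : (0:ℝ) ≤ xi t ^ 2 - xi t),
      mul_nonneg (sq_nonneg (m1 t)) (sq_nonneg (xi t)), sq_nonneg (m1 t),
      hxi1 t ht]
  -- hence G grows at least linearly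
  have hHmono : MonotoneOn (fun s => (2 * p s - m1 s) / xi s - s) (Ici T) := by
    apply monotoneOn_of_deriv_nonneg (convex_Ici T)
    · intro x hx
      exact ((hGd x hx).sub (hasDerivAt_id x)).continuousAt.continuousWithinAt
    · intro x hx
      rw [interior_Ici] at hx
      exact ((hGd x hx.le).sub (hasDerivAt_id x)).differentiableAt.differentiableWithinAt
    · intro x hx
      rw [interior_Ici] at hx
      rw [HasDerivAt.deriv (f := fun s => (2 * p s - m1 s) / xi s - s) ((hGd x hx.le).sub (hasDerivAt_id' (x := x)))]
      have h1 : (1:ℝ) ≤ ((2 * (-((xi x)^2 + 1) * (1 + m2 x * m3 x - 2 * (m3 x)^2 * xi x)) -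
          xi x * (-(m2 x)^2 + (m3 x)^2 + 2 * m2 x * m3 x * xi x)) * xi x -
        (2 * p x - m1 x) * (-((xi x)^2 + 1) * (2 * p x - m1 x))) / xi x ^ 2 :=
        (one_le_div (pow_pos (hxipos x hx.le) 2)).2 (hnum x hx.le)
      linarith
  have hmono' : ∀ t, T ≤ t →
      (2 * p T - m1 T) / xi T + (t - T) ≤ (2 * p t - m1 t) / xi t := by
    intro t ht
    have := hHmono (mem_Ici.2 le_rfl) (mem_Ici.2 ht) ht
    simp only at this
    linarith
  -- but G is bounded
  have hGbd : ∀ t, T ≤ t → ((2 * p t - m1 t) / xi t) ^ 2 ≤ 4 * |E0| + Lc + 4 := by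
    intro t ht
    have hE := hEc t (hTt0.trans ht)
    have hL := hLcon t (hTt0.trans ht)
    have hx1 : (1:ℝ) ≤ xi t := hxi1 t ht
    rw [div_pow, div_le_iff₀ (pow_pos (hxipos t ht) 2)]
    nlinarith [sq_nonneg (2 * m3 t * xi t - m2 t),
      mul_nonneg (by positivity : (0:ℝ) ≤ 4 * |E0| + Lc)
        (by nlinarith : (0:ℝ) ≤ xi t ^ 2 - 1),
      le_abs_self E0, neg_abs_le E0, sq_nonneg (m3 t),
      (by nlinarith : (0:ℝ) ≤ xi t ^ 2 - xi t)]
  -- contradiction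
  set K2 : ℝ := 4 * |E0| + Lc + 4 with hK2
  have hK2nn : (0:ℝ) ≤ K2 := by positivity
  set GT : ℝ := (2 * p T - m1 T) / xi T with hGT
  have ht1T : T ≤ T + (K2 + |GT| + 1) := by
    have := abs_nonneg GT; linarith
  have h1 := hmono' (T + (K2 + |GT| + 1)) ht1T
  have h2 := hGbd (T + (K2 + |GT| + 1)) ht1T
  nlinarith [le_abs_self GT, neg_abs_le GT, abs_nonneg GT,
    sq_nonneg ((2 * p (T + (K2 + |GT| + 1)) - m1 (T + (K2 + |GT| + 1))) /
      xi (T + (K2 + |GT| + 1)) - 1)]
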